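/- arXiv:1710.00786 — 2 statements merged into one kernel-verified Lean document; each statement's English description precedes it below -/
import Mathlib

section
/- Let g ≥ 1, let π_g be the genus-g surface group, and let φ : π_g → F_h be a surjective group homomorphism onto a free group of finite rank h. Then there exists an element b ∈ ker φ whose image in the abelianization of π_g is nonzero. (In the paper this is established via the vanishing of the cup product on H¹ of a free group: the pullback φ*H¹(F_h;ℤ) is an isotropic subspace of H¹(S_g;ℤ) of dimension at most g, so some b with φ(b) = 1 is homologically nontrivial.) -/
open scoped commutatorElement

/-- The single relator `[a₁,b₁][a₂,b₂]⋯[a_g,b_g]` of the genus-`g` surface group,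
where `aᵢ` is the generator of index `2*i` and `bᵢ` the generator of index `2*i+1`. -/
def surfaceRelator (g : ℕ) : FreeGroup (Fin (2 * g)) :=
  (List.ofFn fun i : Fin g =>
    ⁅FreeGroup.of (⟨2 * i, by have := i.2; omega⟩ : Fin (2 * g)),
     FreeGroup.of (⟨2 * i + 1, by have := i.2; omega⟩ : Fin (2 * g))⁆).prod

/-- The genus-`g` surface group `π_g = ⟨a₁,b₁,…,a_g,b_g ∣ [a₁,b₁]⋯[a_g,b_g]⟩`. -/
def SurfaceGroup (g : ℕ) : Type :=
  PresentedGroup ({surfaceRelator g} : Set (FreeGroup (Fin (2 * g))))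

instance (g : ℕ) : Group (SurfaceGroup g) :=
  inferInstanceAs (Group (PresentedGroup _))

/-- The standard generators of the genus-`g` surface group. -/
def SurfaceGroup.gen (g : ℕ) (i : Fin (2 * g)) : SurfaceGroup g :=
  PresentedGroup.of i

/-- `IA(G)`: the subgroup of `Aut(G)` of automorphisms acting trivially on the
abelianization of `G`. -/
def IA (G : Type*) [Group G] : Subgroup (MulAut G) where
  carrier := {f | ∀ x : G, Abelianization.of (f x) = Abelianization.of x}
  one_mem' := fun _ => rfl
  mul_mem' := by
    intro f h hf hh x
    exact (hf (h x)).trans (hh x)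
  inv_mem' := by
    intro f hf x
    have h := hf (f⁻¹ x)
    simp only [MulAut.inv_def] at *
    rw [MulEquiv.apply_symm_apply] at h
    exact h.symm

/-- `Inn(G)`: the group of inner automorphisms of `G`. -/
def Inn (G : Type*) [Group G] : Subgroup (MulAut G) :=
  (MulAut.conj (G := G)).range

instance Inn.normal (G : Type*) [Group G] : (Inn G).Normal := by
  constructor
  rintro x ⟨γ, rfl⟩ f
  refine ⟨f γ, ?_⟩
  ext y
  simp [MulAut.conj_apply, mul_assoc]

@[ext] structure Heis where
  a : ℤ
  b : ℤ
  c : ℤ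

instance : Mul Heis := ⟨fun x y => ⟨x.a + y.a, x.b + y.b, x.c + y.c + x.a * y.b⟩⟩
instance : One Heis := ⟨⟨0, 0, 0⟩⟩
instance : Inv Heis := ⟨fun x => ⟨-x.a, -x.b, x.a * x.b - x.c⟩⟩

@[simp] lemma Heis.mul_a (x y : Heis) : (x * y).a = x.a + y.a := rfl
@[simp] lemma Heis.mul_b (x y : Heis) : (x * y).b = x.b + y.b := rfl
@[simp] lemma Heis.mul_c (x y : Heis) : (x * y).c = x.c + y.c + x.a * y.b := rfl
@[simp] lemma Heis.one_a : (1 : Heis).a = 0 := rfl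
@[simp] lemma Heis.one_b : (1 : Heis).b = 0 := rfl
@[simp] lemma Heis.one_c : (1 : Heis).c = 0 := rfl
@[simp] lemma Heis.inv_a (x : Heis) : x⁻¹.a = -x.a := rfl
@[simp] lemma Heis.inv_b (x : Heis) : x⁻¹.b = -x.b := rfl
@[simp] lemma Heis.inv_c (x : Heis) : x⁻¹.c = x.a * x.b - x.c := rfl

instance : Group Heis where
  mul_assoc x y z := by ext <;> simp <;> ring
  one_mul x := by ext <;> simp
  mul_one x := by ext <;> simp
  inv_mul_cancel x := by ext <;> simp

lemma Heis.commutator_eq (x y : Heis) : ⁅x, y⁆ = ⟨0, 0, x.a * y.b - y.a * x.b⟩ := by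
  show x * y * x⁻¹ * y⁻¹ = _
  ext <;> simp <;> ring

/-- The `a`-projection as a hom to `Multiplicative ℤ`. -/
def Heis.projA : Heis →* Multiplicative ℤ where
  toFun x := Multiplicative.ofAdd x.a
  map_one' := rfl
  map_mul' x y := rfl

/-- The `b`-projection as a hom to `Multiplicative ℤ`. -/
def Heis.projB : Heis →* Multiplicative ℤ where
  toFun x := Multiplicative.ofAdd x.b
  map_one' := rfl
  map_mul' x y := rfl

/-- `c`-component of a product of elements with vanishing `a`-component. -/
lemma Heis.prod_c (l : List Heis) (hl : ∀ x ∈ l, x.a = 0) :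
    l.prod.c = (l.map Heis.c).sum := by
  induction l with
  | nil => rfl
  | cons x t ih =>
      simp only [List.prod_cons, List.map_cons, List.sum_cons, Heis.mul_c,
        hl x (List.mem_cons_self ..), ih (fun y hy => hl y (List.mem_cons_of_mem _ hy))]
      ring

/-- If two homs into `Heis` agree on `a`- and `b`-components, the difference of their
`c`-components is a homomorphism. -/
def Heis.cdiff {G : Type*} [Group G] (θ₁ θ₂ : G →* Heis)
    (ha : ∀ x, (θ₁ x).a = (θ₂ x).a) (hb : ∀ x, (θ₁ x).b = (θ₂ x).b) :
    G →* Multiplicative ℤ where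
  toFun x := Multiplicative.ofAdd ((θ₁ x).c - (θ₂ x).c)
  map_one' := by simp
  map_mul' x y := by
    simp only [map_mul, Heis.mul_c, ha, hb, ← ofAdd_add]
    congr 1
    ring

/-- Any hom from the free group to a commutative group kills the surface relator. -/
lemma comm_kills_relator {g : ℕ} {M : Type*} [CommGroup M]
    (ψ : FreeGroup (Fin (2 * g)) →* M) : ψ (surfaceRelator g) = 1 := by
  rw [surfaceRelator, map_list_prod]
  refine List.prod_eq_one ?_
  intro x hx
  simp only [List.map_ofFn, List.mem_ofFn] at hx
  obtain ⟨i, rfl⟩ := hx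
  simp only [Function.comp_apply, map_commutatorElement]
  exact commutatorElement_eq_one_iff_mul_comm.mpr (mul_comm _ _)

/-- For `g ≥ 1` and any surjection `φ : π_g → F_h` onto a free group of finite
rank, some element of `ker φ` is homologically nontrivial, i.e. has nonzero
image in the abelianization of `π_g`. -/
theorem kernel_contains_homologically_nontrivial (g h : ℕ) (hg : 1 ≤ g)
    (φ : SurfaceGroup g →* FreeGroup (Fin h)) (hφ : Function.Surjective φ) :
    ∃ b ∈ φ.ker, Abelianization.of b ≠ 1 := by
  by_contra hcon
  push_neg at hcon
  have : NeZero g := ⟨by omega⟩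
  -- the projection from the free group
  let pr : FreeGroup (Fin (2 * g)) →* SurfaceGroup g :=
    PresentedGroup.mk ({surfaceRelator g} : Set (FreeGroup (Fin (2 * g))))
  have hprof : ∀ i, pr (FreeGroup.of i) = SurfaceGroup.gen g i := fun i => rfl
  have hprrel : pr (surfaceRelator g) = 1 := by
    have : surfaceRelator g ∈ Subgroup.normalClosure
        ({surfaceRelator g} : Set (FreeGroup (Fin (2 * g)))) :=
      Subgroup.subset_normalClosure rfl
    exact (QuotientGroup.eq_one_iff _).mpr this
  -- every `ℤ`-valued character of the surface group factors through `φ`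
  have factor : ∀ w : SurfaceGroup g →* Multiplicative ℤ,
      ∃ w' : FreeGroup (Fin h) →* Multiplicative ℤ, ∀ x, w' (φ x) = w x := by
    intro w
    have hker : φ.ker ≤ w.ker := by
      intro b hb
      have h1 : Abelianization.of b = 1 := hcon b hb
      have h2 : Abelianization.lift w (Abelianization.of b) = w b :=
        Abelianization.lift_apply_of w b
      rw [h1, map_one] at h2
      exact h2.symm
    let e := QuotientGroup.quotientKerEquivOfSurjective φ hφ
    refine ⟨(QuotientGroup.lift φ.ker w hker).comp e.symm.toMonoidHom, fun x => ?_⟩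
    have : e.symm (φ x) = QuotientGroup.mk x := by
      apply e.injective
      simp only [MulEquiv.apply_symm_apply]
      rfl
    simp [this]
  -- the dual characters of the first two generators
  have hudef : ∀ (k : ℕ), ∃ u : SurfaceGroup g →* Multiplicative ℤ,
      ∀ i : Fin (2 * g), u (SurfaceGroup.gen g i) =
        Multiplicative.ofAdd (if (i : ℕ) = k then (1 : ℤ) else 0) := by
    intro k
    refine ⟨PresentedGroup.toGroup (f := fun i : Fin (2 * g) =>
      Multiplicative.ofAdd (if (i : ℕ) = k then (1 : ℤ) else 0)) ?_, fun i => ?_⟩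
    · rintro r rfl
      exact comm_kills_relator _
    · exact PresentedGroup.toGroup.of _
  obtain ⟨u, hu⟩ := hudef 0
  obtain ⟨v, hv⟩ := hudef 1
  obtain ⟨u', hu'⟩ := factor u
  obtain ⟨v', hv'⟩ := factor v
  -- Heisenberg lifts
  let θ : FreeGroup (Fin (2 * g)) →* Heis :=
    FreeGroup.lift fun i => ⟨(u (SurfaceGroup.gen g i)).toAdd,
      (v (SurfaceGroup.gen g i)).toAdd, 0⟩
  let θ' : FreeGroup (Fin h) →* Heis :=
    FreeGroup.lift fun j => ⟨(u' (FreeGroup.of j)).toAdd, (v' (FreeGroup.of j)).toAdd, 0⟩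
  let θ'' : FreeGroup (Fin (2 * g)) →* Heis := θ'.comp (φ.comp pr)
  have hθ'a : ∀ y, (θ' y).a = (u' y).toAdd := by
    intro y
    have : Heis.projA.comp θ' = u' := by
      apply FreeGroup.ext_hom
      intro j
      simp [θ', Heis.projA]
    have := congrArg (fun f => f y) this
    rw [← this]; rfl
  have hθ'b : ∀ y, (θ' y).b = (v' y).toAdd := by
    intro y
    have : Heis.projB.comp θ' = v' := by
      apply FreeGroup.ext_hom
      intro j
      simp [θ', Heis.projB]
    have := congrArg (fun f => f y) this
    rw [← this]; rfl
  have ha : ∀ x, (θ x).a = (θ'' x).a := by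
    intro x
    have : Heis.projA.comp θ = Heis.projA.comp θ'' := by
      apply FreeGroup.ext_hom
      intro i
      simp only [MonoidHom.comp_apply, θ, θ'', FreeGroup.lift_apply_of]
      simp only [Heis.projA, MonoidHom.coe_mk, OneHom.coe_mk]
      rw [hθ'a, hprof, hu' (SurfaceGroup.gen g i)]
    have := congrArg (fun f => f x) this
    simpa [Heis.projA, Multiplicative.ofAdd] using this
  have hb : ∀ x, (θ x).b = (θ'' x).b := by
    intro x
    have : Heis.projB.comp θ = Heis.projB.comp θ'' := by
      apply FreeGroup.ext_hom
      intro i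
      simp only [MonoidHom.comp_apply, θ, θ'', FreeGroup.lift_apply_of]
      simp only [Heis.projB, MonoidHom.coe_mk, OneHom.coe_mk]
      rw [hθ'b, hprof, hv' (SurfaceGroup.gen g i)]
    have := congrArg (fun f => f x) this
    simpa [Heis.projB, Multiplicative.ofAdd] using this
  -- the c-components of θ and θ'' agree on the relator
  have hδ : (θ (surfaceRelator g)).c = (θ'' (surfaceRelator g)).c := by
    have := comm_kills_relator (Heis.cdiff θ θ'' ha hb) (g := g)
    have h2 : Multiplicative.ofAdd ((θ (surfaceRelator g)).c
        - (θ'' (surfaceRelator g)).c) = 1 := this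
    have h3 : (θ (surfaceRelator g)).c - (θ'' (surfaceRelator g)).c = 0 := by
      have := congrArg Multiplicative.toAdd h2
      simpa using this
    omega
  have hθ''rel : (θ'' (surfaceRelator g)).c = 0 := by
    simp only [θ'', MonoidHom.comp_apply, hprrel, map_one, Heis.one_c]
  -- compute (θ (surfaceRelator g)).c = 1
  have hcomp : (θ (surfaceRelator g)).c = 1 := by
    rw [surfaceRelator, map_list_prod, List.map_ofFn]
    have hval : ∀ i : Fin (2 * g), θ (FreeGroup.of i) =
        ⟨if (i : ℕ) = 0 then 1 else 0, if (i : ℕ) = 1 then 1 else 0, 0⟩ := by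
      intro i
      simp only [θ, FreeGroup.lift_apply_of, hu i, hv i]
      rfl
    have hcommval : ∀ i : Fin g,
        (θ ∘ fun i : Fin g =>
          ⁅FreeGroup.of (⟨2 * i, by have := i.2; omega⟩ : Fin (2 * g)),
           FreeGroup.of (⟨2 * i + 1, by have := i.2; omega⟩ : Fin (2 * g))⁆) i =
        ⟨0, 0, if (i : ℕ) = 0 then 1 else 0⟩ := by
      intro i
      simp only [Function.comp_apply, map_commutatorElement, hval, Heis.commutator_eq]
      ext
      · rfl
      · rfl
      · simp only
        rcases Nat.eq_zero_or_pos (i : ℕ) with hi | hi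
        · simp [hi]
        · have h1 : ¬ (2 * (i : ℕ) = 0) := by omega
          have h2 : ¬ (2 * (i : ℕ) + 1 = 0) := by omega
          have h3 : ¬ (2 * (i : ℕ) = 1) := by omega
          have h4 : ¬ ((i : ℕ) = 0) := by omega
          simp [h1, h2, h3, h4]
    have hlist : (List.ofFn (θ ∘ fun i : Fin g =>
          ⁅FreeGroup.of (⟨2 * i, by have := i.2; omega⟩ : Fin (2 * g)),
           FreeGroup.of (⟨2 * i + 1, by have := i.2; omega⟩ : Fin (2 * g))⁆)) =
        List.ofFn (fun i : Fin g => (⟨0, 0, if (i : ℕ) = 0 then 1 else 0⟩ : Heis)) := by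
      congr 1
      exact funext hcommval
    rw [hlist, Heis.prod_c _ (by
      intro x hx
      simp only [List.mem_ofFn] at hx
      obtain ⟨i, rfl⟩ := hx
      rfl)]
    rw [List.map_ofFn, List.sum_ofFn]
    have hcond : ∀ i : Fin g, ((i : ℕ) = 0) = (i = (0 : Fin g)) := by
      intro i
      rw [Fin.ext_iff, Fin.val_zero]
    calc (∑ i : Fin g, ((Heis.c ∘ fun i : Fin g =>
            (⟨0, 0, if (i : ℕ) = 0 then 1 else 0⟩ : Heis)) i))
        = ∑ i : Fin g, (if i = (0 : Fin g) then (1 : ℤ) else 0) := by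
          refine Finset.sum_congr rfl fun i _ => ?_
          simp only [Function.comp_apply, hcond]
      _ = 1 := by simp
  rw [hδ, hθ''rel] at hcomp
  exact absurd hcomp (by norm_num)
end

section
/- Let g ≥ 1 and let π_g be the genus-g surface group. If there exists a surjective group homomorphism from π_g onto the free group F_h of rank h, then h ≤ g. (This is the quantitative content of the isotropic-subspace argument in the proof of Lemma 3.2 of the paper: since the cup product H¹(F_h;ℤ) ⊗ H¹(F_h;ℤ) → H²(F_h;ℤ) vanishes, the image of φ* in H¹(S_g;ℤ) is an isotropic subspace and hence has dimension at most g.) -/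
open scoped commutatorElement

/-- The integer Heisenberg group (over `ℚ`), used to trivialize the cup-product
cocycle of two homomorphisms to `ℚ`. -/
@[ext] structure Heis3 : Type where
  x : ℚ
  y : ℚ
  z : ℚ

namespace Heis3

instance : Mul Heis3 := ⟨fun a b => ⟨a.x + b.x, a.y + b.y, a.z + b.z + a.x * b.y⟩⟩
instance : One Heis3 := ⟨⟨0, 0, 0⟩⟩
instance : Inv Heis3 := ⟨fun a => ⟨-a.x, -a.y, -a.z + a.x * a.y⟩⟩

@[simp] lemma mul_x (a b : Heis3) : (a * b).x = a.x + b.x := rfl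
@[simp] lemma mul_y (a b : Heis3) : (a * b).y = a.y + b.y := rfl
@[simp] lemma mul_z (a b : Heis3) : (a * b).z = a.z + b.z + a.x * b.y := rfl
@[simp] lemma one_x : (1 : Heis3).x = 0 := rfl
@[simp] lemma one_y : (1 : Heis3).y = 0 := rfl
@[simp] lemma one_z : (1 : Heis3).z = 0 := rfl
@[simp] lemma inv_x (a : Heis3) : a⁻¹.x = -a.x := rfl
@[simp] lemma inv_y (a : Heis3) : a⁻¹.y = -a.y := rfl
@[simp] lemma inv_z (a : Heis3) : a⁻¹.z = -a.z + a.x * a.y := rfl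

instance : Group Heis3 where
  mul_assoc a b c := by ext <;> simp <;> ring
  one_mul a := by ext <;> simp
  mul_one a := by ext <;> simp
  inv_mul_cancel a := by ext <;> simp <;> ring

lemma commutator_eq (a b : Heis3) :
    ⁅a, b⁆ = ⟨0, 0, a.x * b.y - b.x * a.y⟩ := by
  show a * b * a⁻¹ * b⁻¹ = _
  ext <;> simp <;> ring

lemma prod_central (l : List Heis3) (hx : ∀ a ∈ l, a.x = 0) (hy : ∀ a ∈ l, a.y = 0) :
    l.prod = ⟨0, 0, (l.map Heis3.z).sum⟩ := by
  induction l with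
  | nil => rfl
  | cons a t ih =>
      have hax := hx a (by simp)
      have hay := hy a (by simp)
      rw [List.prod_cons, ih (fun b hb => hx b (by simp [hb])) (fun b hb => hy b (by simp [hb]))]
      ext <;> simp [hax, hay]

/-- The `x`-coordinate as a homomorphism to `Multiplicative ℚ`. -/
def px : Heis3 →* Multiplicative ℚ where
  toFun a := Multiplicative.ofAdd a.x
  map_one' := rfl
  map_mul' a b := rfl

/-- The `y`-coordinate as a homomorphism to `Multiplicative ℚ`. -/
def py : Heis3 →* Multiplicative ℚ where
  toFun a := Multiplicative.ofAdd a.y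
  map_one' := rfl
  map_mul' a b := rfl

@[simp] lemma px_apply (a : Heis3) : px a = Multiplicative.ofAdd a.x := rfl
@[simp] lemma py_apply (a : Heis3) : py a = Multiplicative.ofAdd a.y := rfl

end Heis3


/-- The index of the generator `aᵢ`. -/
def genA (g : ℕ) (i : Fin g) : Fin (2 * g) := ⟨2 * i, by have := i.2; omega⟩
/-- The index of the generator `bᵢ`. -/
def genB (g : ℕ) (i : Fin g) : Fin (2 * g) := ⟨2 * i + 1, by have := i.2; omega⟩

lemma genA_ne_genB (g : ℕ) (i j : Fin g) : genA g i ≠ genB g j := by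
  simp only [genA, genB, ne_eq, Fin.mk.injEq]; omega

lemma genB_inj (g : ℕ) {i j : Fin g} (h : genB g i = genB g j) : i = j := by
  simp only [genB, Fin.mk.injEq] at h; exact Fin.ext (by omega)

lemma genA_inj (g : ℕ) {i j : Fin g} (h : genA g i = genA g j) : i = j := by
  simp only [genA, Fin.mk.injEq] at h; exact Fin.ext (by omega)

lemma surfaceRelator_eq (g : ℕ) : surfaceRelator g =
    (List.ofFn fun i : Fin g =>
      ⁅FreeGroup.of (genA g i), FreeGroup.of (genB g i)⁆).prod := rfl

/-- Evaluating the `z`-coordinate of the image of the surface relator under any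
homomorphism to the Heisenberg group gives the symplectic pairing. -/
lemma z_map_surfaceRelator (g : ℕ) (f : FreeGroup (Fin (2 * g)) →* Heis3) :
    (f (surfaceRelator g)).z =
      ∑ i : Fin g, ((f (FreeGroup.of (genA g i))).x * (f (FreeGroup.of (genB g i))).y
        - (f (FreeGroup.of (genB g i))).x * (f (FreeGroup.of (genA g i))).y) := by
  rw [surfaceRelator_eq, map_list_prod, List.map_ofFn]
  have hcomp : (f ∘ fun i : Fin g => ⁅FreeGroup.of (genA g i), FreeGroup.of (genB g i)⁆)
      = fun i : Fin g => (⟨0, 0, (f (FreeGroup.of (genA g i))).x * (f (FreeGroup.of (genB g i))).y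
        - (f (FreeGroup.of (genB g i))).x * (f (FreeGroup.of (genA g i))).y⟩ : Heis3) := by
    funext i
    simp only [Function.comp_apply, map_commutatorElement, Heis3.commutator_eq]
  rw [hcomp, Heis3.prod_central]
  · simp [List.map_ofFn, List.sum_ofFn, Function.comp_def]
  · intro a ha
    rw [List.mem_ofFn] at ha
    obtain ⟨i, rfl⟩ := ha
    rfl
  · intro a ha
    rw [List.mem_ofFn] at ha
    obtain ⟨i, rfl⟩ := ha
    rfl

open Module in
/-- The standard symplectic form on `ℚ^{2g}`. -/
def symp (g : ℕ) : (Fin (2 * g) → ℚ) →ₗ[ℚ] Dual ℚ (Fin (2 * g) → ℚ) :=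
  LinearMap.mk₂ ℚ
    (fun x y => ∑ i : Fin g, (x (genA g i) * y (genB g i) - x (genB g i) * y (genA g i)))
    (fun m₁ m₂ n => by
      simp only [Pi.add_apply]
      rw [← Finset.sum_add_distrib]
      exact Finset.sum_congr rfl fun i _ => by ring)
    (fun c m n => by
      simp only [Pi.smul_apply, smul_eq_mul]
      rw [Finset.mul_sum]
      exact Finset.sum_congr rfl fun i _ => by ring)
    (fun m n₁ n₂ => by
      simp only [Pi.add_apply]
      rw [← Finset.sum_add_distrib]
      exact Finset.sum_congr rfl fun i _ => by ring)
    (fun c m n => by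
      simp only [Pi.smul_apply, smul_eq_mul]
      rw [Finset.mul_sum]
      exact Finset.sum_congr rfl fun i _ => by ring)

lemma symp_apply (g : ℕ) (x y : Fin (2 * g) → ℚ) :
    symp g x y = ∑ i : Fin g, (x (genA g i) * y (genB g i) - x (genB g i) * y (genA g i)) := rfl

lemma symp_single_B (g : ℕ) (x : Fin (2 * g) → ℚ) (i : Fin g) :
    symp g x (Pi.single (genB g i) 1) = x (genA g i) := by
  rw [symp_apply]
  have key : ∀ j : Fin g, (x (genA g j) * (Pi.single (M := fun _ : Fin (2*g) => ℚ) (genB g i) 1) (genB g j)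
      - x (genB g j) * (Pi.single (M := fun _ : Fin (2*g) => ℚ) (genB g i) 1) (genA g j))
      = if j = i then x (genA g j) else 0 := by
    intro j
    rcases eq_or_ne j i with rfl | hne
    · simp [Pi.single_apply, (genA_ne_genB g j j)]
    · have h1 : genB g j ≠ genB g i := fun h => hne (genB_inj g h)
      simp [Pi.single_apply, h1, (genA_ne_genB g j i), hne]
  rw [Finset.sum_congr rfl fun j _ => key j]
  simp

lemma symp_single_A (g : ℕ) (x : Fin (2 * g) → ℚ) (i : Fin g) :
    symp g x (Pi.single (genA g i) 1) = -x (genB g i) := by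
  rw [symp_apply]
  have key : ∀ j : Fin g, (x (genA g j) * (Pi.single (M := fun _ : Fin (2*g) => ℚ) (genA g i) 1) (genB g j)
      - x (genB g j) * (Pi.single (M := fun _ : Fin (2*g) => ℚ) (genA g i) 1) (genA g j))
      = if j = i then -x (genB g j) else 0 := by
    intro j
    rcases eq_or_ne j i with rfl | hne
    · simp [Pi.single_apply, (genA_ne_genB g j j).symm]
    · have h1 : genA g j ≠ genA g i := fun h => hne (genA_inj g h)
      simp [Pi.single_apply, h1, (genA_ne_genB g i j).symm, hne]
  rw [Finset.sum_congr rfl fun j _ => key j]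
  simp

lemma symp_injective (g : ℕ) : Function.Injective (symp g) := by
  rw [← LinearMap.ker_eq_bot, Submodule.eq_bot_iff]
  intro x hx
  rw [LinearMap.mem_ker] at hx
  funext t
  have ht : ∃ i : Fin g, t = genA g i ∨ t = genB g i := by
    rcases Nat.even_or_odd t.val with ⟨m, hm⟩ | ⟨m, hm⟩
    · exact ⟨⟨m, by have := t.2; omega⟩, Or.inl (Fin.ext (by simp [genA]; omega))⟩
    · exact ⟨⟨m, by have := t.2; omega⟩, Or.inr (Fin.ext (by simp [genB]; omega))⟩
  obtain ⟨i, rfl | rfl⟩ := ht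
  · have := symp_single_B g x i
    rw [hx] at this
    simpa using this.symm
  · have := symp_single_A g x i
    rw [hx] at this
    simpa using (neg_eq_zero.mp this.symm)


open Module

/-- For `g ≥ 1`, if the genus-`g` surface group surjects onto the free group of
rank `h`, then `h ≤ g`. -/
theorem rank_le_genus_of_surjective (g h : ℕ) (hg : 1 ≤ g)
    (φ : SurfaceGroup g →* FreeGroup (Fin h)) (hφ : Function.Surjective φ) :
    h ≤ g := by
  classical
  -- recast `φ` with the `PresentedGroup` instances
  let φ' : PresentedGroup ({surfaceRelator g} : Set (FreeGroup (Fin (2 * g)))) →*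
      FreeGroup (Fin h) := φ
  have hφ' : Function.Surjective φ' := hφ
  -- the composite `FreeGroup (Fin (2g)) → π_g → F_h`
  let ψ : FreeGroup (Fin (2 * g)) →* FreeGroup (Fin h) :=
    φ'.comp (PresentedGroup.mk ({surfaceRelator g} : Set (FreeGroup (Fin (2 * g)))))
  have hψr : ψ (surfaceRelator g) = 1 := by
    have h1 : PresentedGroup.mk ({surfaceRelator g} : Set (FreeGroup (Fin (2 * g))))
        (surfaceRelator g) = 1 :=
      (QuotientGroup.eq_one_iff _).2 (Subgroup.subset_normalClosure (Set.mem_singleton _))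
    show φ' _ = 1
    rw [h1, map_one]
  have hψs : Function.Surjective ψ := by
    have := Function.Surjective.comp hφ'
      (PresentedGroup.mk_surjective ({surfaceRelator g} : Set (FreeGroup (Fin (2 * g)))))
    simpa [ψ, MonoidHom.coe_comp] using this
  -- coordinate homomorphisms of `F_h` with rational coefficients
  let E : (Fin h → ℚ) → (FreeGroup (Fin h) →* Multiplicative ℚ) :=
    fun c => FreeGroup.lift (fun k => Multiplicative.ofAdd (c k))
  -- pullback vectors in `ℚ^{2g}`
  let v : Fin h → (Fin (2 * g) → ℚ) :=
    fun j i => Multiplicative.toAdd (E (Pi.single j 1) (ψ (FreeGroup.of i)))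
  -- Heisenberg trivializations
  let Λ : Fin h → Fin h → (FreeGroup (Fin h) →* Heis3) :=
    fun j k => FreeGroup.lift (fun m => ⟨Pi.single (M := fun _ : Fin h => ℚ) j 1 m, Pi.single (M := fun _ : Fin h => ℚ) k 1 m, 0⟩)
  have hx : ∀ (j k : Fin h) (w : FreeGroup (Fin h)),
      (Λ j k w).x = Multiplicative.toAdd (E (Pi.single j 1) w) := by
    intro j k w
    have : Heis3.px.comp (Λ j k) = E (Pi.single j 1) :=
      FreeGroup.ext_hom _ _ (fun a => by simp [Λ, E])
    have h2 := DFunLike.congr_fun this w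
    simpa [Heis3.px] using congrArg Multiplicative.toAdd h2
  have hy : ∀ (j k : Fin h) (w : FreeGroup (Fin h)),
      (Λ j k w).y = Multiplicative.toAdd (E (Pi.single k 1) w) := by
    intro j k w
    have : Heis3.py.comp (Λ j k) = E (Pi.single k 1) :=
      FreeGroup.ext_hom _ _ (fun a => by simp [Λ, E])
    have h2 := DFunLike.congr_fun this w
    simpa [Heis3.py] using congrArg Multiplicative.toAdd h2
  -- isotropy of the pullback subspace
  have hiso : ∀ j k : Fin h, symp g (v j) (v k) = 0 := by
    intro j k
    have hz := z_map_surfaceRelator g ((Λ j k).comp ψ)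
    have h1 : ((Λ j k).comp ψ) (surfaceRelator g) = 1 := by
      rw [MonoidHom.comp_apply, hψr, map_one]
    rw [h1] at hz
    rw [symp_apply]
    have : ∀ i : Fin g,
        (v j (genA g i) * v k (genB g i) - v j (genB g i) * v k (genA g i))
        = (((Λ j k).comp ψ) (FreeGroup.of (genA g i))).x
            * (((Λ j k).comp ψ) (FreeGroup.of (genB g i))).y
          - (((Λ j k).comp ψ) (FreeGroup.of (genB g i))).x
            * (((Λ j k).comp ψ) (FreeGroup.of (genA g i))).y := by
      intro i
      simp only [MonoidHom.comp_apply, hx, hy, v]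
    rw [Finset.sum_congr rfl fun i _ => this i, ← hz]
    rfl
  -- linear independence of the pullback vectors
  have hli : LinearIndependent ℚ v := by
    rw [Fintype.linearIndependent_iff]
    intro c hc j
    -- the sum of coordinate homs weighted by `c`
    let S : FreeGroup (Fin h) →* Multiplicative ℚ :=
      { toFun := fun w => Multiplicative.ofAdd
          (∑ m : Fin h, c m * Multiplicative.toAdd (E (Pi.single m 1) w))
        map_one' := by simp
        map_mul' := by
          intro u w
          show Multiplicative.ofAdd _ = Multiplicative.ofAdd _ * Multiplicative.ofAdd _
          rw [← ofAdd_add, ← Finset.sum_add_distrib]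
          congr 1
          exact Finset.sum_congr rfl fun m _ => by rw [map_mul, toAdd_mul]; ring }
    have hES : E c = S := by
      refine FreeGroup.ext_hom _ _ (fun a => ?_)
      have hl : E c (FreeGroup.of a) = Multiplicative.ofAdd (c a) := FreeGroup.lift_apply_of
      have hr : S (FreeGroup.of a) = Multiplicative.ofAdd
          (∑ m : Fin h, c m * Multiplicative.toAdd (E (Pi.single m 1) (FreeGroup.of a))) := rfl
      rw [hl, hr]
      congr 1
      symm
      have : ∀ m : Fin h, c m * Multiplicative.toAdd (E (Pi.single m 1) (FreeGroup.of a))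
          = if a = m then c m else 0 := by
        intro m
        simp [E, Pi.single_apply]
      rw [Finset.sum_congr rfl fun m _ => this m]
      simp
    have hpt : ∀ i : Fin (2 * g), E c (ψ (FreeGroup.of i)) = 1 := by
      intro i
      have h2 := congrFun hc i
      simp only [Finset.sum_apply, Pi.smul_apply, smul_eq_mul, Pi.zero_apply] at h2
      rw [hES]
      show Multiplicative.ofAdd
        (∑ m : Fin h, c m * Multiplicative.toAdd (E (Pi.single m 1) (ψ (FreeGroup.of i))))
        = (1 : Multiplicative ℚ)
      rw [ofAdd_eq_one]
      exact h2
    have hzero : (E c).comp ψ = 1 :=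
      FreeGroup.ext_hom _ _ (fun a => by simpa using hpt a)
    have hEc : ∀ u, E c u = 1 := by
      intro u
      obtain ⟨w, rfl⟩ := hψs u
      exact DFunLike.congr_fun hzero w
    have := hEc (FreeGroup.of j)
    simp only [E, FreeGroup.lift_apply_of] at this
    simpa using congrArg Multiplicative.toAdd this
  -- the linear-algebra endgame
  let V : Submodule ℚ (Fin (2 * g) → ℚ) := Submodule.span ℚ (Set.range v)
  have hV : finrank ℚ V = h := by
    rw [finrank_span_eq_card hli, Fintype.card_fin]
  have hmap : Submodule.map (symp g) V ≤ V.dualAnnihilator := by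
    rw [Submodule.map_le_iff_le_comap, Submodule.span_le]
    rintro _ ⟨j, rfl⟩
    simp only [SetLike.mem_coe, Submodule.mem_comap, Submodule.mem_dualAnnihilator]
    intro y hy
    have hker : V ≤ LinearMap.ker (symp g (v j)) := by
      rw [Submodule.span_le]
      rintro _ ⟨k, rfl⟩
      simpa [LinearMap.mem_ker] using hiso j k
    exact hker hy
  have e1 : finrank ℚ V = finrank ℚ (Submodule.map (symp g) V) :=
    (Submodule.equivMapOfInjective _ (symp_injective g) V).finrank_eq
  have e2 : finrank ℚ (Submodule.map (symp g) V) ≤ finrank ℚ V.dualAnnihilator :=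
    Submodule.finrank_mono hmap
  have e3 : finrank ℚ V.dualAnnihilator = finrank ℚ ((Fin (2 * g) → ℚ) ⧸ V) :=
    (Subspace.quotEquivAnnihilator V).finrank_eq.symm
  have e4 : finrank ℚ ((Fin (2 * g) → ℚ) ⧸ V) + finrank ℚ V = finrank ℚ (Fin (2 * g) → ℚ) :=
    Submodule.finrank_quotient_add_finrank V
  have e5 : finrank ℚ (Fin (2 * g) → ℚ) = 2 * g := Module.finrank_fin_fun ℚ
  omega
end
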